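/- arXiv:1309.4532 — 2 statements merged into one kernel-verified Lean document; each statement's English description precedes it below -/
import Mathlib

section
/- Let g be the free vector space over ℚ with basis {e_{m,l} : m, l ∈ ℕ}. Define a bilinear bracket on g by [e_{m,l}, e_{n,k}] = (k·m − n·l)·e_{m+n−1, k+l−1} whenever m+n ≥ 1 and k+l ≥ 1, and [e_{m,l}, e_{n,k}] = 0 whenever m+n = 0 or k+l = 0 (note that in those degenerate cases the structure constant k·m − n·l vanishes, since m = n = 0 or k = l = 0). Then this bracket is antisymmetric (alternating) and satisfies the Jacobi identity, so that g is a Lie algebra over ℚ. -/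
/-- The bracket of two basis vectors `e_{m,l}`, `e_{n,k}` of the Block type Lie
algebra: `[e_{m,l}, e_{n,k}] = (k*m - n*l) • e_{m+n-1, k+l-1}` when `m+n ≥ 1` and
`k+l ≥ 1`, and `0` otherwise. -/
noncomputable def blockBasisBracket (p q : ℕ × ℕ) : (ℕ × ℕ) →₀ ℚ :=
  if 1 ≤ p.1 + q.1 ∧ 1 ≤ p.2 + q.2 then
    Finsupp.single (p.1 + q.1 - 1, p.2 + q.2 - 1)
      ((q.2 : ℚ) * (p.1 : ℚ) - (q.1 : ℚ) * (p.2 : ℚ))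
  else 0

/-- The bilinear extension of `blockBasisBracket` to the free `ℚ`-vector space
with basis `{e_{m,l} : m, l ∈ ℕ}`. -/
noncomputable def blockBracket :
    ((ℕ × ℕ) →₀ ℚ) →ₗ[ℚ] ((ℕ × ℕ) →₀ ℚ) →ₗ[ℚ] ((ℕ × ℕ) →₀ ℚ) :=
  Finsupp.lsum ℚ fun p =>
    LinearMap.toSpanSingleton ℚ _
      (Finsupp.lsum ℚ fun q =>
        LinearMap.toSpanSingleton ℚ _ (blockBasisBracket p q))

lemma bbb_eq (p q : ℕ × ℕ) :
    blockBasisBracket p q = Finsupp.single (p.1 + q.1 - 1, p.2 + q.2 - 1)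
      ((q.2 : ℚ) * (p.1 : ℚ) - (q.1 : ℚ) * (p.2 : ℚ)) := by
  unfold blockBasisBracket
  split_ifs with h
  · rfl
  · symm
    rw [Finsupp.single_eq_zero]
    rcases not_and_or.mp h with h1 | h1 <;>
      [ (have h2 : p.1 = 0 ∧ q.1 = 0 := by omega);
        (have h2 : p.2 = 0 ∧ q.2 = 0 := by omega) ] <;>
      simp [h2.1, h2.2]

lemma bracket_single (p q : ℕ × ℕ) (a b : ℚ) :
    blockBracket (Finsupp.single p a) (Finsupp.single q b)
      = (a * b) • blockBasisBracket p q := by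
  simp [blockBracket, Finsupp.lsum_single, LinearMap.toSpanSingleton_apply, smul_smul]

lemma anti_basis (p q : ℕ × ℕ) : blockBasisBracket p q = - blockBasisBracket q p := by
  rw [bbb_eq, bbb_eq, ← Finsupp.single_neg]
  have h1 : q.1 + p.1 = p.1 + q.1 := by omega
  have h2 : q.2 + p.2 = p.2 + q.2 := by omega
  rw [h1, h2]
  congr 1
  ring

lemma double_bracket (p q r : ℕ × ℕ) :
    blockBracket (Finsupp.single p 1) (blockBasisBracket q r)
      = Finsupp.single (p.1 + q.1 + r.1 - 2, p.2 + q.2 + r.2 - 2)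
          (((r.2 : ℚ) * q.1 - (r.1 : ℚ) * q.2) *
            (((q.2 : ℚ) + (r.2 : ℚ) - 1) * p.1 - ((q.1 : ℚ) + (r.1 : ℚ) - 1) * p.2)) := by
  obtain ⟨p1, p2⟩ := p
  obtain ⟨q1, q2⟩ := q
  obtain ⟨r1, r2⟩ := r
  rw [bbb_eq, bracket_single, bbb_eq]
  simp only [one_mul, Finsupp.smul_single']
  by_cases h1 : q1 + r1 = 0
  · have hq : q1 = 0 := by omega
    have hr : r1 = 0 := by omega
    subst hq hr
    simp
  by_cases h2 : q2 + r2 = 0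
  · have hq : q2 = 0 := by omega
    have hr : r2 = 0 := by omega
    subst hq hr
    simp
  have c1 : ((q1 + r1 - 1 : ℕ) : ℚ) = (q1 : ℚ) + r1 - 1 := by
    rw [Nat.cast_sub (by omega)]; push_cast; ring
  have c2 : ((q2 + r2 - 1 : ℕ) : ℚ) = (q2 : ℚ) + r2 - 1 := by
    rw [Nat.cast_sub (by omega)]; push_cast; ring
  by_cases h3 : p1 + q1 + r1 = 1
  · have hp1 : p1 = 0 := by omega
    have hs : q1 + r1 - 1 = 0 := by omega
    have hs' : (q1 : ℚ) + r1 - 1 = 0 := by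
      have : ((q1 + r1 : ℕ) : ℚ) = 1 := by rw [show q1 + r1 = 1 by omega]; norm_num
      push_cast at this; linarith
    rw [Finsupp.single_eq_zero.mpr, Finsupp.single_eq_zero.mpr]
    · rw [hs', hp1]; push_cast; ring
    · rw [hs, hp1]; push_cast; ring
  by_cases h4 : p2 + q2 + r2 = 1
  · have hp2 : p2 = 0 := by omega
    have hs : q2 + r2 - 1 = 0 := by omega
    have hs' : (q2 : ℚ) + r2 - 1 = 0 := by
      have : ((q2 + r2 : ℕ) : ℚ) = 1 := by rw [show q2 + r2 = 1 by omega]; norm_num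
      push_cast at this; linarith
    rw [Finsupp.single_eq_zero.mpr, Finsupp.single_eq_zero.mpr]
    · rw [hs', hp2]; push_cast; ring
    · rw [hs, hp2]; push_cast; ring
  have e1 : p1 + (q1 + r1 - 1) - 1 = p1 + q1 + r1 - 2 := by omega
  have e2 : p2 + (q2 + r2 - 1) - 1 = p2 + q2 + r2 - 2 := by omega
  rw [e1, e2, c1, c2]

lemma jacobi_single (p q r : ℕ × ℕ) :
    blockBracket (Finsupp.single p 1) (blockBracket (Finsupp.single q 1) (Finsupp.single r 1))
      + blockBracket (Finsupp.single q 1) (blockBracket (Finsupp.single r 1) (Finsupp.single p 1))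
      + blockBracket (Finsupp.single r 1) (blockBracket (Finsupp.single p 1) (Finsupp.single q 1))
      = 0 := by
  rw [bracket_single q r, bracket_single r p, bracket_single p q]
  norm_num
  rw [double_bracket, double_bracket, double_bracket]
  have e1 : q.1 + r.1 + p.1 - 2 = p.1 + q.1 + r.1 - 2 := by omega
  have e2 : q.2 + r.2 + p.2 - 2 = p.2 + q.2 + r.2 - 2 := by omega
  have e3 : r.1 + p.1 + q.1 - 2 = p.1 + q.1 + r.1 - 2 := by omega
  have e4 : r.2 + p.2 + q.2 - 2 = p.2 + q.2 + r.2 - 2 := by omega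
  rw [e1, e2, e3, e4, ← Finsupp.single_add, ← Finsupp.single_add]
  rw [show (((r.2:ℚ) * q.1 - (r.1:ℚ) * q.2) *
        (((q.2:ℚ) + r.2 - 1) * p.1 - ((q.1:ℚ) + r.1 - 1) * p.2)
      + ((p.2:ℚ) * r.1 - (p.1:ℚ) * r.2) *
        (((r.2:ℚ) + p.2 - 1) * q.1 - ((r.1:ℚ) + p.1 - 1) * q.2)
      + ((q.2:ℚ) * p.1 - (q.1:ℚ) * p.2) *
        (((p.2:ℚ) + q.2 - 1) * r.1 - ((p.1:ℚ) + q.1 - 1) * r.2)) = 0 from by ring,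
    Finsupp.single_zero]

/-- The bilinear bracket with `[e_{m,l}, e_{n,k}] = (k·m − n·l)·e_{m+n−1,k+l−1}`
is antisymmetric and satisfies the Jacobi identity, so it makes the free
`ℚ`-vector space on `{e_{m,l} : m, l ∈ ℕ}` a Lie algebra over `ℚ`. -/
theorem blockBracket_antisymm_jacobi :
    (∀ x y : (ℕ × ℕ) →₀ ℚ, blockBracket x y = - blockBracket y x) ∧
    (∀ x y z : (ℕ × ℕ) →₀ ℚ,
      blockBracket x (blockBracket y z) + blockBracket y (blockBracket z x) +
        blockBracket z (blockBracket x y) = 0) := by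
  constructor
  · intro x y
    induction x using Finsupp.induction_linear with
    | zero => simp
    | add f g hf hg => simp only [map_add, LinearMap.add_apply, hf, hg]; abel
    | single p a =>
      induction y using Finsupp.induction_linear with
      | zero => simp
      | add f g hf hg => simp only [map_add, LinearMap.add_apply, hf, hg]; abel
      | single q b =>
        rw [bracket_single, bracket_single, anti_basis, smul_neg, mul_comm]
  · intro x y z
    induction x using Finsupp.induction_linear with
    | zero => simp
    | add f g hf hg =>
      simp only [map_add, LinearMap.add_apply]
      linear_combination (norm := module) hf + hg
    | single p a =>
      induction y using Finsupp.induction_linear with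
      | zero => simp
      | add f g hf hg =>
        simp only [map_add, LinearMap.add_apply]
        linear_combination (norm := module) hf + hg
      | single q b =>
        induction z using Finsupp.induction_linear with
        | zero => simp
        | add f g hf hg =>
          simp only [map_add, LinearMap.add_apply]
          linear_combination (norm := module) hf + hg
        | single r c =>
          rw [← Finsupp.smul_single_one p a, ← Finsupp.smul_single_one q b,
            ← Finsupp.smul_single_one r c]
          simp only [map_smul, LinearMap.smul_apply, LinearMap.map_smul, smul_smul]
          rw [show c * b * a = a*b*c from by ring, show a * c * b = a*b*c from by ring,
            show b * a * c = a*b*c from by ring, ← smul_add, ← smul_add,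
            jacobi_single, smul_zero]
end

section
/- Let g be the Lie algebra over ℚ with basis {e_{m,l} : m, l ∈ ℕ} and bracket [e_{m,l}, e_{n,k}] = (k·m − n·l)·e_{m+n−1, k+l−1} (interpreted as 0 when m+n = 0 or k+l = 0, where the coefficient vanishes). Then g is generated as a Lie algebra by the five elements e_{0,1}, e_{1,0}, e_{1,1}, e_{2,1}, e_{1,2}; that is, the Lie subalgebra of g generated by {e_{0,1}, e_{1,0}, e_{1,1}, e_{2,1}, e_{1,2}} is all of g. -/
/-- The basis vector `e_{m,l}`. -/
noncomputable def e (m l : ℕ) : (ℕ × ℕ) →₀ ℚ := Finsupp.single (m, l) 1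

lemma bracket_e (m l n k : ℕ) :
    blockBracket (e m l) (e n k) = blockBasisBracket (m, l) (n, k) := by
  simp [blockBracket, e, Finsupp.lsum_single, LinearMap.toSpanSingleton_apply]

lemma coeff_ne (k m n l : ℕ) (h : k * m ≠ n * l) :
    (k : ℚ) * m - n * l ≠ 0 := by
  intro hh
  rw [sub_eq_zero] at hh
  exact h (by exact_mod_cast hh)

lemma step (N : Submodule ℚ ((ℕ × ℕ) →₀ ℚ))
    (hclosed : ∀ x ∈ N, ∀ y ∈ N, blockBracket x y ∈ N)
    (m l n k : ℕ) (h1 : e m l ∈ N) (h2 : e n k ∈ N)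
    (hm : 1 ≤ m + n) (hk : 1 ≤ l + k)
    (hc : k * m ≠ n * l) :
    e (m + n - 1) (l + k - 1) ∈ N := by
  have h := hclosed _ h1 _ h2
  rw [bracket_e] at h
  unfold blockBasisBracket at h
  simp only [if_pos (And.intro hm hk)] at h
  have hc' := coeff_ne k m n l hc
  have h2 := N.smul_mem (((k : ℚ) * m - n * l)⁻¹) h
  rw [Finsupp.smul_single, smul_eq_mul, inv_mul_cancel₀ hc'] at h2
  simpa [e] using h2


/-- The Block type Lie algebra `g` with basis `{e_{m,l} : m, l ∈ ℕ}` and bracket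
`[e_{m,l}, e_{n,k}] = (k·m − n·l)·e_{m+n−1,k+l−1}` is generated, as a Lie
algebra, by the five elements `e_{0,1}, e_{1,0}, e_{1,1}, e_{2,1}, e_{1,2}`:
every `ℚ`-subspace containing these five elements and closed under the bracket
is all of `g`. -/
theorem blockAlgebra_generated_by_five
    (N : Submodule ℚ ((ℕ × ℕ) →₀ ℚ))
    (he01 : e 0 1 ∈ N) (he10 : e 1 0 ∈ N) (he11 : e 1 1 ∈ N)
    (he21 : e 2 1 ∈ N) (he12 : e 1 2 ∈ N)
    (hclosed : ∀ x ∈ N, ∀ y ∈ N, blockBracket x y ∈ N) :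
    ∀ v : (ℕ × ℕ) →₀ ℚ, v ∈ N := by
  have he00 : e 0 0 ∈ N := by
    have h := step N hclosed 0 1 1 0 he01 he10 (by omega) (by omega) (by omega)
    simpa using h
  have row : ∀ m, e m 0 ∈ N := by
    intro m
    induction m using Nat.strong_induction_on with
    | _ m ih =>
      match m with
      | 0 => exact he00
      | 1 => exact he10
      | (m + 2) =>
        have h := step N hclosed 2 1 (m + 1) 0 he21 (ih (m + 1) (by omega))
          (by omega) (by omega) (by omega)
        simp only [show 2 + (m + 1) - 1 = m + 2 from by omega,
          show 1 + 0 - 1 = 0 from rfl] at h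
        exact h
  have col : ∀ l, e 0 l ∈ N := by
    intro l
    induction l using Nat.strong_induction_on with
    | _ l ih =>
      match l with
      | 0 => exact he00
      | 1 => exact he01
      | (l + 2) =>
        have h := step N hclosed 1 2 0 (l + 1) he12 (ih (l + 1) (by omega))
          (by omega) (by omega) (by omega)
        simp only [show 1 + 0 - 1 = 0 from rfl,
          show 2 + (l + 1) - 1 = l + 2 from by omega] at h
        exact h
  have key : ∀ s m l, m + l ≤ s → e m l ∈ N := by
    intro s
    induction s with
    | zero =>
      intro m l h
      obtain ⟨rfl, rfl⟩ := (by omega : m = 0 ∧ l = 0)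
      exact he00
    | succ s ih =>
      intro m l hml
      match m, l with
      | 0, l => exact col l
      | (m + 1), 0 => exact row (m + 1)
      | (m + 1), (l + 1) =>
        by_cases hca : l = 2 * (m + 1)
        · -- use [e 2 1, e m (l+1)]; coefficient 2(l+1) - m ≠ 0
          have h := step N hclosed 2 1 m (l + 1) he21 (ih m (l + 1) (by omega))
            (by omega) (by omega) (by omega)
          simp only [show 2 + m - 1 = m + 1 from by omega,
            show 1 + (l + 1) - 1 = l + 1 from by omega] at h
          exact h
        · -- use [e 1 2, e (m+1) l]; coefficient (l - 2(m+1)) ≠ 0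
          have h := step N hclosed 1 2 (m + 1) l he12 (ih (m + 1) l (by omega))
            (by omega) (by omega) (by omega)
          simp only [show 1 + (m + 1) - 1 = m + 1 from by omega,
            show 2 + l - 1 = l + 1 from by omega] at h
          exact h
  intro v
  induction v using Finsupp.induction_linear with
  | zero => exact N.zero_mem
  | add f g hf hg => exact N.add_mem hf hg
  | single p c =>
    have : Finsupp.single p c = c • e p.1 p.2 := by
      simp [e, Finsupp.smul_single]
    rw [this]
    exact N.smul_mem _ (key (p.1 + p.2) p.1 p.2 le_rfl)
end
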